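/- Let A be an almost Kähler–Poisson algebra with tangent space X(A) and covariant derivative ∇. If X, Y ∈ X(A) then [X,Y] ∈ X(A), and the covariant derivative has no torsion: ∇_X Y − ∇_Y X − [X,Y] = 0 for all X, Y ∈ X(A). -/

import Mathlib

open scoped BigOperators

namespace KPA

/-- The field of fractions of the polynomial ring `ℂ[x¹,…,xᵐ]`. -/
abbrev A (m : ℕ) := FractionRing (MvPolynomial (Fin m) ℂ)

/-- The generators `x^i` of `A m`. -/
noncomputable def Xg {m : ℕ} (i : Fin m) : A m :=
  algebraMap (MvPolynomial (Fin m) ℂ) (A m) (MvPolynomial.X i)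

/-- The image of a complex constant in `A m`. -/
noncomputable def cC {m : ℕ} (z : ℂ) : A m :=
  algebraMap (MvPolynomial (Fin m) ℂ) (A m) (MvPolynomial.C z)

/-- An almost Kähler–Poisson algebra: the field of fractions `A m` of `ℂ[x¹,…,xᵐ]`,
equipped with a ∗-structure `st` fixing the generators, a Poisson bracket `br`
compatible with ∗, and an invertible hermitian element `γ2` such that
`P^i_k P^k_l P^l_j = -γ² P^i_j` where `P^{ij} = {x^i, x^j}`. -/
structure AKP (m : ℕ) where
  br : A m → A m → A m
  st : A m → A m
  br_add_left : ∀ a b c, br (a + b) c = br a c + br b c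
  br_antisymm : ∀ a b, br a b = - br b a
  br_leibniz : ∀ a b c, br a (b * c) = br a b * c + b * br a c
  br_jacobi : ∀ a b c, br a (br b c) + br b (br c a) + br c (br a b) = 0
  br_const : ∀ (z : ℂ) (a : A m), br (cC z) a = 0
  st_add : ∀ a b, st (a + b) = st a + st b
  st_mul : ∀ a b, st (a * b) = st a * st b
  st_invol : ∀ a, st (st a) = a
  st_const : ∀ z : ℂ, st (cC z) = cC (starRingEnd ℂ z)
  st_x : ∀ i, st (Xg i) = Xg i
  st_br : ∀ a b, st (br a b) = br (st a) (st b)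
  γ2 : A m
  γ2_ne : γ2 ≠ 0
  γ2_herm : st γ2 = γ2
  akp : ∀ i j, (∑ k, ∑ l, br (Xg i) (Xg k) * br (Xg k) (Xg l) * br (Xg l) (Xg j))
      = - γ2 * br (Xg i) (Xg j)

namespace AKP

variable {m : ℕ} (S : AKP m)

/-- `P^{ij} = {x^i, x^j}`. -/
noncomputable def P (i j : Fin m) : A m := S.br (Xg i) (Xg j)

/-- `D^i(u) = γ^{-2} {u, x^k} P^i_k`. -/
noncomputable def D (u : A m) (i : Fin m) : A m := S.γ2⁻¹ * ∑ k, S.br u (Xg k) * S.P i k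

/-- `D^{ik} = D^i(x^k)`. -/
noncomputable def Dm (i k : Fin m) : A m := S.D (Xg k) i

/-- Membership in the tangent space `X(A) = {D(X) : X ∈ Der(A)}` (in components). -/
def tang (T : Fin m → A m) : Prop := ∃ V : Fin m → A m, ∀ i, T i = ∑ k, S.Dm i k * V k

/-- The tangent space `X(A)` as a submodule of `A^m` : the range of the projection `D`. -/
noncomputable def tSp : Submodule (A m) (Fin m → A m) :=
  LinearMap.range (Matrix.mulVecLin (Matrix.of fun i k => S.Dm i k))

/-- Action `X(u) = X^i D_i(u)` of a tangent vector on an element. -/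
noncomputable def act (X : Fin m → A m) (u : A m) : A m := ∑ i, X i * S.D u i

/-- The covariant derivative `∇_X Y = D^{ik} X^l D_l(Y_k) ∂_i` (in components). -/
noncomputable def nab (X Y : Fin m → A m) (i : Fin m) : A m :=
  ∑ k, S.Dm i k * ∑ l, X l * S.D (Y k) l

/-- The commutator `[X,Y]^i = X(Y^i) - Y(X^i)`. -/
noncomputable def lie (X Y : Fin m → A m) (i : Fin m) : A m := S.act X (Y i) - S.act Y (X i)

/-- The curvature `R(X,Y)Z = ∇_X ∇_Y Z - ∇_Y ∇_X Z - ∇_{[X,Y]} Z`. -/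
noncomputable def curv (X Y Z : Fin m → A m) (i : Fin m) : A m :=
  S.nab X (S.nab Y Z) i - S.nab Y (S.nab X Z) i - S.nab (S.lie X Y) Z i

/-- The bilinear form `(X,Y) = X^i Y_i`. -/
noncomputable def ipa (_S : AKP m) (X Y : Fin m → A m) : A m := ∑ i, X i * Y i

/-- `R(X,Y,Z,V) = (R(Z,V)Y, X)`. -/
noncomputable def Rq (X Y Z V : Fin m → A m) : A m := S.ipa (S.curv Z V Y) X

/-- `(∇_X R)(Y,Z,V)`, the covariant derivative of the curvature tensor. -/
noncomputable def nabR (X Y Z V : Fin m → A m) (i : Fin m) : A m :=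
  S.nab X (S.curv Y Z V) i - S.curv (S.nab X Y) Z V i
    - S.curv Y (S.nab X Z) V i - S.curv Y Z (S.nab X V) i

/-- `Π^{ij} = δ^{ij} - D^{ij}`. -/
noncomputable def Pim (i j : Fin m) : A m := (if i = j then 1 else 0) - S.Dm i j

/-- The positivity preorder: `a ≥ 0` iff `a = (∑ uᵢ* uᵢ)/(∑ vₖ* vₖ)`. -/
def pos (a : A m) : Prop :=
  ∃ (N N' : ℕ) (u : Fin N → A m) (v : Fin N' → A m),
    a = (∑ i, S.st (u i) * u i) / (∑ k, S.st (v k) * v k)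

end AKP
end KPA


namespace KPA
namespace AKP

variable {m : ℕ} (S : AKP m)

lemma aux_br_zero_left (a : A m) : S.br 0 a = 0 := by
  have h := S.br_add_left 0 0 a
  rw [add_zero] at h
  exact right_eq_add.mp h

lemma aux_br_zero_right (a : A m) : S.br a 0 = 0 := by
  rw [S.br_antisymm, aux_br_zero_left, neg_zero]

lemma aux_br_add_right (a b c : A m) : S.br a (b + c) = S.br a b + S.br a c := by
  rw [S.br_antisymm, S.br_add_left, S.br_antisymm b a, S.br_antisymm c a]
  ring

lemma aux_br_neg_right (a b : A m) : S.br a (-b) = - S.br a b := by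
  have h := S.aux_br_add_right a b (-b)
  rw [add_neg_cancel, aux_br_zero_right] at h
  linear_combination -h

lemma aux_br_one_right (a : A m) : S.br a 1 = 0 := by
  have h := S.br_leibniz a 1 1
  simp only [mul_one, one_mul] at h
  exact right_eq_add.mp h

lemma aux_br_leibniz_left (a b c : A m) : S.br (a * b) c = S.br a c * b + a * S.br b c := by
  rw [S.br_antisymm, S.br_leibniz, S.br_antisymm a c, S.br_antisymm b c]
  ring

lemma aux_br_inv_right (a b : A m) (hb : b ≠ 0) :
    S.br a b⁻¹ = -(b⁻¹ * b⁻¹) * S.br a b := by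
  have h := S.br_leibniz a b b⁻¹
  rw [mul_inv_cancel₀ hb, aux_br_one_right] at h
  have hb' : b * S.br a b⁻¹ = - (S.br a b * b⁻¹) := by linear_combination -h
  have := congrArg (fun t => b⁻¹ * t) hb'
  simp only [← mul_assoc, inv_mul_cancel₀ hb, one_mul] at this
  rw [this]; ring

lemma aux_br_c_right (a : A m) (z : ℂ) : S.br a (cC z) = 0 := by
  rw [S.br_antisymm, S.br_const, neg_zero]

/-- The key "chain rule" lemma: for any `f`, the vector `{x^i, f}` lies in the
column span of `P`. -/
lemma aux_key (f : A m) :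
    ∃ c : Fin m → A m, ∀ i, S.br (Xg i) f = ∑ a, c a * S.P i a := by
  classical
  set pr : A m → Prop := fun f => ∃ c : Fin m → A m, ∀ i, S.br (Xg i) f = ∑ a, c a * S.P i a
    with hpr
  have h0 : pr 0 := ⟨0, fun i => by simp [aux_br_zero_right]⟩
  have hmul : ∀ f g, pr f → pr g → pr (f * g) := by
    rintro f g ⟨c, hc⟩ ⟨d, hd⟩
    refine ⟨fun a => c a * g + f * d a, fun i => ?_⟩
    rw [S.br_leibniz, hc i, hd i, Finset.sum_mul, Finset.mul_sum, ← Finset.sum_add_distrib]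
    exact Finset.sum_congr rfl fun a _ => by ring
  have hinv : ∀ f, pr f → pr f⁻¹ := by
    rintro f ⟨c, hc⟩
    by_cases hf : f = 0
    · rw [hf, inv_zero]; exact h0
    · refine ⟨fun a => -(f⁻¹ * f⁻¹) * c a, fun i => ?_⟩
      rw [S.aux_br_inv_right _ _ hf, hc i, Finset.mul_sum]
      exact Finset.sum_congr rfl fun a _ => by ring
  have halg : ∀ p : MvPolynomial (Fin m) ℂ,
      pr (algebraMap (MvPolynomial (Fin m) ℂ) (A m) p) := by
    intro p
    induction p using MvPolynomial.induction_on with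
    | C z =>
      refine ⟨0, fun i => ?_⟩
      have : S.br (Xg i) (cC z) = 0 := S.aux_br_c_right _ z
      simpa [cC] using this
    | add p q hp hq =>
      obtain ⟨c, hc⟩ := hp; obtain ⟨d, hd⟩ := hq
      refine ⟨fun a => c a + d a, fun i => ?_⟩
      rw [map_add, aux_br_add_right, hc i, hd i, ← Finset.sum_add_distrib]
      exact Finset.sum_congr rfl fun a _ => by ring
    | mul_X p n hp =>
      have hXn : pr (Xg n) := by
        refine ⟨fun a => if a = n then 1 else 0, fun i => ?_⟩
        simp [Xg, P, ite_mul, Finset.sum_ite_eq']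
      rw [map_mul]
      exact hmul _ _ hp hXn
  obtain ⟨p, q, hq, rfl⟩ := IsFractionRing.div_surjective (A := MvPolynomial (Fin m) ℂ) f
  rw [div_eq_mul_inv]
  exact hmul _ _ (halg p) (hinv _ (halg q))

lemma aux_P_anti (i j : Fin m) : S.P i j = - S.P j i := S.br_antisymm _ _

lemma aux_gi : S.γ2⁻¹ * S.γ2 = 1 := inv_mul_cancel₀ S.γ2_ne

lemma aux_Dm_eq (i k : Fin m) : S.Dm i k = S.γ2⁻¹ * ∑ l, S.P k l * S.P i l := rfl

/-- `D P = P`. -/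
lemma aux_DP (i j : Fin m) : ∑ k, S.Dm i k * S.P k j = S.P i j := by
  have h1 : ∀ k, S.Dm i k * S.P k j = S.γ2⁻¹ * ∑ l, S.P k l * S.P i l * S.P k j := by
    intro k
    rw [aux_Dm_eq, mul_assoc, Finset.sum_mul]
  have h2 : ∑ k, ∑ l, S.P k l * S.P i l * S.P k j
      = ∑ k, ∑ l, -(S.P i k * S.P k l * S.P l j) := by
    rw [Finset.sum_comm]
    refine Finset.sum_congr rfl fun k _ => Finset.sum_congr rfl fun l _ => ?_
    rw [S.aux_P_anti l k]
    ring
  have h3 : ∑ k, ∑ l, S.P i k * S.P k l * S.P l j = - S.γ2 * S.P i j := S.akp i j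
  calc ∑ k, S.Dm i k * S.P k j
      = S.γ2⁻¹ * ∑ k, ∑ l, S.P k l * S.P i l * S.P k j := by
        rw [Finset.mul_sum]; exact Finset.sum_congr rfl fun k _ => h1 k
    _ = S.γ2⁻¹ * (S.γ2 * S.P i j) := by
        have h4 : ∑ k : Fin m, ∑ l : Fin m, -(S.P i k * S.P k l * S.P l j)
            = S.γ2 * S.P i j := by
          simp only [Finset.sum_neg_distrib, h3]; ring
        rw [h2, h4]
    _ = S.P i j := by rw [← mul_assoc, aux_gi, one_mul]


lemma aux_Dm_symm (i k : Fin m) : S.Dm i k = S.Dm k i := by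
  rw [aux_Dm_eq, aux_Dm_eq]
  congr 1
  exact Finset.sum_congr rfl fun l _ => by ring

lemma aux_ham_of_tang {X : Fin m → A m} (h : S.tang X) :
    ∃ ξ : Fin m → A m, ∀ i, X i = ∑ a, S.P i a * ξ a := by
  obtain ⟨V, hV⟩ := h
  refine ⟨fun l => ∑ k, S.γ2⁻¹ * S.P k l * V k, fun i => ?_⟩
  rw [hV i]
  calc ∑ k, S.Dm i k * V k
      = ∑ k, ∑ l, S.P i l * (S.γ2⁻¹ * S.P k l * V k) := by
        refine Finset.sum_congr rfl fun k _ => ?_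
        rw [aux_Dm_eq, Finset.mul_sum, Finset.sum_mul]
        exact Finset.sum_congr rfl fun l _ => by ring
    _ = ∑ l, S.P i l * ∑ k, S.γ2⁻¹ * S.P k l * V k := by
        rw [Finset.sum_comm]
        exact Finset.sum_congr rfl fun l _ => by rw [Finset.mul_sum]

lemma aux_fix_of_ham {X : Fin m → A m} {ξ : Fin m → A m}
    (h : ∀ i, X i = ∑ a, S.P i a * ξ a) (i : Fin m) :
    ∑ k, S.Dm i k * X k = X i := by
  calc ∑ k, S.Dm i k * X k
      = ∑ k, ∑ a, S.Dm i k * S.P k a * ξ a := by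
        refine Finset.sum_congr rfl fun k _ => ?_
        rw [h k, Finset.mul_sum]
        exact Finset.sum_congr rfl fun a _ => by ring
    _ = ∑ a, (∑ k, S.Dm i k * S.P k a) * ξ a := by
        rw [Finset.sum_comm]
        exact Finset.sum_congr rfl fun a _ => by rw [Finset.sum_mul]
    _ = X i := by
        rw [h i]
        exact Finset.sum_congr rfl fun a _ => by rw [aux_DP]

lemma aux_tang_of_ham {X : Fin m → A m}
    (h : ∃ ξ : Fin m → A m, ∀ i, X i = ∑ a, S.P i a * ξ a) : S.tang X := by
  obtain ⟨ξ, hξ⟩ := h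
  exact ⟨X, fun i => (S.aux_fix_of_ham hξ i).symm⟩

lemma aux_D_add (u v : A m) (i : Fin m) : S.D (u + v) i = S.D u i + S.D v i := by
  unfold D
  rw [← mul_add, ← Finset.sum_add_distrib]
  congr 1
  exact Finset.sum_congr rfl fun k _ => by rw [S.br_add_left]; ring

lemma aux_D_zero (i : Fin m) : S.D 0 i = 0 := by
  unfold D
  simp [aux_br_zero_left]

lemma aux_D_mul (u v : A m) (i : Fin m) :
    S.D (u * v) i = S.D u i * v + u * S.D v i := by
  unfold D
  have h : ∀ k, S.br (u * v) (Xg k) * S.P i k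
      = S.br u (Xg k) * S.P i k * v + u * (S.br v (Xg k) * S.P i k) := by
    intro k; rw [aux_br_leibniz_left]; ring
  calc S.γ2⁻¹ * ∑ k, S.br (u * v) (Xg k) * S.P i k
      = S.γ2⁻¹ * ∑ k, (S.br u (Xg k) * S.P i k * v + u * (S.br v (Xg k) * S.P i k)) := by
        rw [Finset.sum_congr rfl fun k _ => h k]
    _ = S.γ2⁻¹ * ((∑ k, S.br u (Xg k) * S.P i k) * v + u * ∑ k, S.br v (Xg k) * S.P i k) := by
        rw [Finset.sum_add_distrib, ← Finset.sum_mul, ← Finset.mul_sum]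
    _ = S.γ2⁻¹ * (∑ k, S.br u (Xg k) * S.P i k) * v
        + u * (S.γ2⁻¹ * ∑ k, S.br v (Xg k) * S.P i k) := by ring

lemma aux_act_add (X : Fin m → A m) (u v : A m) :
    S.act X (u + v) = S.act X u + S.act X v := by
  unfold act
  rw [← Finset.sum_add_distrib]
  exact Finset.sum_congr rfl fun i _ => by rw [aux_D_add]; ring

lemma aux_act_zero (X : Fin m → A m) : S.act X 0 = 0 := by
  unfold act; simp [aux_D_zero]

lemma aux_act_mul (X : Fin m → A m) (u v : A m) :
    S.act X (u * v) = S.act X u * v + u * S.act X v := by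
  unfold act
  rw [Finset.sum_mul, Finset.mul_sum, ← Finset.sum_add_distrib]
  exact Finset.sum_congr rfl fun i _ => by rw [aux_D_mul]; ring

lemma aux_act_sum (X : Fin m → A m) (f : Fin m → A m) :
    S.act X (∑ a, f a) = ∑ a, S.act X (f a) := by
  let φ : A m →+ A m :=
    { toFun := S.act X, map_zero' := S.aux_act_zero X, map_add' := S.aux_act_add X }
  exact map_sum φ f Finset.univ

noncomputable def mu (X : Fin m → A m) (a : Fin m) : A m := S.γ2⁻¹ * ∑ j, X j * S.P j a

lemma aux_act_eq (X : Fin m → A m) (u : A m) :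
    S.act X u = ∑ a, S.mu X a * S.br u (Xg a) := by
  have h1 : S.act X u = ∑ i, ∑ a, X i * S.γ2⁻¹ * S.br u (Xg a) * S.P i a := by
    unfold act D
    refine Finset.sum_congr rfl fun i _ => ?_
    rw [Finset.mul_sum, Finset.mul_sum]
    exact Finset.sum_congr rfl fun a _ => by ring
  have h2 : ∀ a, S.mu X a * S.br u (Xg a)
      = ∑ i, X i * S.γ2⁻¹ * S.br u (Xg a) * S.P i a := by
    intro a
    simp only [mu]
    rw [Finset.mul_sum, Finset.sum_mul]
    exact Finset.sum_congr rfl fun i _ => by ring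
  rw [h1, Finset.sum_comm]
  exact Finset.sum_congr rfl fun a _ => (h2 a).symm

lemma aux_act_x {X : Fin m → A m} {ξ : Fin m → A m}
    (h : ∀ i, X i = ∑ a, S.P i a * ξ a) (i : Fin m) : S.act X (Xg i) = X i := by
  have h0 : S.act X (Xg i) = ∑ j, S.Dm i j * X j := by
    unfold act
    refine Finset.sum_congr rfl fun j _ => ?_
    rw [show S.D (Xg i) j = S.Dm j i from rfl, S.aux_Dm_symm j i]
    ring
  rw [h0, S.aux_fix_of_ham h i]

lemma aux_jac (u : A m) (a b : Fin m) :
    S.br (S.br u (Xg a)) (Xg b) - S.br (S.br u (Xg b)) (Xg a)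
      = S.br u (S.br (Xg a) (Xg b)) := by
  have hJ := S.br_jacobi (Xg a) (Xg b) u
  have h1 : S.br (Xg a) (S.br (Xg b) u) = S.br (S.br u (Xg b)) (Xg a) := by
    rw [S.br_antisymm (Xg b) u, aux_br_neg_right, S.br_antisymm (Xg a) (S.br u (Xg b))]
    ring
  have h2 : S.br (Xg b) (S.br u (Xg a)) = - S.br (S.br u (Xg a)) (Xg b) :=
    S.br_antisymm _ _
  rw [h1, h2] at hJ
  linear_combination -hJ

lemma aux_lie_ham {X Y : Fin m → A m} (hX : S.tang X) (hY : S.tang Y) :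
    ∃ ξ : Fin m → A m, ∀ i, S.lie X Y i = ∑ a, S.P i a * ξ a := by
  classical
  obtain ⟨ξX, hξX⟩ := S.aux_ham_of_tang hX
  obtain ⟨ξY, hξY⟩ := S.aux_ham_of_tang hY
  choose c hc using fun a b => S.aux_key (S.P a b)
  have hmuY : ∀ i, Y i = ∑ a, S.mu Y a * S.P i a := by
    intro i
    rw [← S.aux_act_x hξY i, aux_act_eq]
    exact Finset.sum_congr rfl fun a _ => rfl
  have hmuX : ∀ i, X i = ∑ a, S.mu X a * S.P i a := by
    intro i
    rw [← S.aux_act_x hξX i, aux_act_eq]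
    exact Finset.sum_congr rfl fun a _ => rfl
  have expand : ∀ (Zc Wc : Fin m → A m) (i : Fin m),
      S.act Zc (∑ a, S.mu Wc a * S.P i a)
      = ∑ a, S.act Zc (S.mu Wc a) * S.P i a
        + ∑ a, ∑ b, S.mu Zc b * S.mu Wc a * S.br (S.P i a) (Xg b) := by
    intro Zc Wc i
    rw [aux_act_sum, ← Finset.sum_add_distrib]
    refine Finset.sum_congr rfl fun a _ => ?_
    rw [aux_act_mul, aux_act_eq S Zc (S.P i a), Finset.mul_sum]
    congr 1
    exact Finset.sum_congr rfl fun b _ => by ring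
  refine ⟨fun e => (S.act X (S.mu Y e) - S.act Y (S.mu X e))
      + ∑ a, ∑ b, S.mu X b * S.mu Y a * c a b e, fun i => ?_⟩
  have h2 : ∀ a b, S.br (S.P i a) (Xg b) - S.br (S.P i b) (Xg a)
      = ∑ e, c a b e * S.P i e := by
    intro a b
    have hj : S.br (S.P i a) (Xg b) - S.br (S.P i b) (Xg a) = S.br (Xg i) (S.P a b) :=
      S.aux_jac (Xg i) a b
    rw [hj, hc a b i]
  have h1 : S.lie X Y i
      = ∑ a, (S.act X (S.mu Y a) - S.act Y (S.mu X a)) * S.P i a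
        + ∑ a, ∑ b, S.mu X b * S.mu Y a
            * (S.br (S.P i a) (Xg b) - S.br (S.P i b) (Xg a)) := by
    unfold lie
    rw [hmuY i, hmuX i, expand X Y i, expand Y X i]
    have swapB : ∑ a, ∑ b, S.mu Y b * S.mu X a * S.br (S.P i a) (Xg b)
        = ∑ a, ∑ b, S.mu Y a * S.mu X b * S.br (S.P i b) (Xg a) := Finset.sum_comm
    rw [swapB]
    have r1 : ∑ a, (S.act X (S.mu Y a) - S.act Y (S.mu X a)) * S.P i a
        = (∑ a, S.act X (S.mu Y a) * S.P i a) - ∑ a, S.act Y (S.mu X a) * S.P i a := by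
      rw [← Finset.sum_sub_distrib]
      exact Finset.sum_congr rfl fun a _ => by ring
    have r2 : ∑ a, ∑ b, S.mu X b * S.mu Y a
          * (S.br (S.P i a) (Xg b) - S.br (S.P i b) (Xg a))
        = (∑ a, ∑ b, S.mu X b * S.mu Y a * S.br (S.P i a) (Xg b))
          - ∑ a, ∑ b, S.mu Y a * S.mu X b * S.br (S.P i b) (Xg a) := by
      rw [← Finset.sum_sub_distrib]
      refine Finset.sum_congr rfl fun a _ => ?_
      rw [← Finset.sum_sub_distrib]
      exact Finset.sum_congr rfl fun b _ => by ring
    rw [r1, r2]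
    ring
  have h3 : ∑ a, ∑ b, S.mu X b * S.mu Y a
        * (S.br (S.P i a) (Xg b) - S.br (S.P i b) (Xg a))
      = ∑ e, (∑ a, ∑ b, S.mu X b * S.mu Y a * c a b e) * S.P i e := by
    calc ∑ a, ∑ b, S.mu X b * S.mu Y a
          * (S.br (S.P i a) (Xg b) - S.br (S.P i b) (Xg a))
        = ∑ a, ∑ b, ∑ e, S.mu X b * S.mu Y a * c a b e * S.P i e := by
          refine Finset.sum_congr rfl fun a _ => Finset.sum_congr rfl fun b _ => ?_
          rw [h2 a b, Finset.mul_sum]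
          exact Finset.sum_congr rfl fun e _ => by ring
      _ = ∑ a, ∑ e, ∑ b, S.mu X b * S.mu Y a * c a b e * S.P i e :=
          Finset.sum_congr rfl fun a _ => Finset.sum_comm
      _ = ∑ e, ∑ a, ∑ b, S.mu X b * S.mu Y a * c a b e * S.P i e := Finset.sum_comm
      _ = ∑ e, (∑ a, ∑ b, S.mu X b * S.mu Y a * c a b e) * S.P i e := by
          refine Finset.sum_congr rfl fun e _ => ?_
          rw [Finset.sum_mul]
          exact Finset.sum_congr rfl fun a _ => by rw [Finset.sum_mul]
  rw [h1, h3, ← Finset.sum_add_distrib]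
  exact Finset.sum_congr rfl fun a _ => by ring

end AKP
end KPA

/-- If `X, Y ∈ X(A)` then `[X,Y] ∈ X(A)`, and the covariant derivative
has no torsion: `∇_X Y − ∇_Y X − [X,Y] = 0`. -/
theorem statement_13 {m : ℕ} (S : KPA.AKP m) (X Y : Fin m → KPA.A m)
    (hX : S.tang X) (hY : S.tang Y) :
    S.tang (S.lie X Y) ∧ ∀ i, S.nab X Y i - S.nab Y X i - S.lie X Y i = 0 := by
  obtain ⟨ξ, hξ⟩ := S.aux_lie_ham hX hY
  refine ⟨S.aux_tang_of_ham ⟨ξ, hξ⟩, fun i => ?_⟩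
  have h1 : S.nab X Y i - S.nab Y X i = ∑ k, S.Dm i k * S.lie X Y k := by
    unfold KPA.AKP.nab
    rw [← Finset.sum_sub_distrib]
    refine Finset.sum_congr rfl fun k _ => ?_
    unfold KPA.AKP.lie KPA.AKP.act
    ring
  rw [h1, S.aux_fix_of_ham hξ i]
  ring
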